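/- Let c > 0 and for each real r > 1 let ξ_r ∈ (0,1) satisfy f_r'(ξ_r)ξ_r − f_r(ξ_r) = c, where f_r(s) = s^r/(1-s). Then ξ_r → 1 as r → +∞. Moreover, along any sequence r_n → +∞, f_{r_n}(ξ_{r_n}) → 0 and f_{r_n}'(ξ_{r_n}) → c. -/

import Mathlib

open Filter Real

lemma aux_hasDeriv (r x : ℝ) (hx0 : 0 < x) (hx1 : x < 1) :
    HasDerivAt (fun s : ℝ => s ^ r / (1 - s))
      ((r * x ^ (r - 1) * (1 - x) + x ^ r) / (1 - x) ^ 2) x := by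
  have hne : (1 : ℝ) - x ≠ 0 := by linarith
  have h1 : HasDerivAt (fun s : ℝ => s ^ r) (r * x ^ (r - 1)) x :=
    Real.hasDerivAt_rpow_const (Or.inl hx0.ne')
  have h2 : HasDerivAt (fun s : ℝ => 1 - s) (-1) x := (hasDerivAt_id x).const_sub 1
  have : HasDerivAt (fun s : ℝ => s ^ r / (1 - s))
      ((r * x ^ (r - 1) * (1 - x) - x ^ r * -1) / (1 - x) ^ 2) x := h1.div h2 hne
  convert this using 1
  ring

lemma aux_mul_tendsto (b : ℝ) (hb0 : 0 < b) (hb1 : b < 1) :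
    Tendsto (fun r : ℝ => (r + 1) * b ^ r) atTop (nhds 0) := by
  have hlog : 0 < -Real.log b := by
    have := Real.log_neg hb0 hb1; linarith
  have h1 : Tendsto (fun r : ℝ => r * b ^ r) atTop (nhds 0) := by
    refine (tendsto_rpow_mul_exp_neg_mul_atTop_nhds_zero 1 _ hlog).congr' ?_
    filter_upwards [eventually_ge_atTop (0 : ℝ)] with x hx
    rw [Real.rpow_one, neg_neg, Real.rpow_def_of_pos hb0, mul_comm (Real.log b) x]
  have h2 : Tendsto (fun r : ℝ => b ^ r) atTop (nhds 0) :=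
    tendsto_rpow_atTop_of_base_lt_one b (by linarith) hb1
  have := h1.add h2
  simp only [add_zero] at this
  exact this.congr (fun r => by ring)

/-- Let `c > 0` and for each `r > 1` let `ξ r ∈ (0,1)` satisfy
`f_r'(ξ_r)·ξ_r − f_r(ξ_r) = c`, where `f_r(s) = s^r/(1-s)`. Then `ξ_r → 1` as
`r → +∞`, and along any sequence `r_n → +∞` (with `r_n > 1`),
`f_{r_n}(ξ_{r_n}) → 0` and `f_{r_n}'(ξ_{r_n}) → c`. -/
theorem stmt_5 (c : ℝ) (hc : 0 < c) (ξ : ℝ → ℝ)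
    (hmem : ∀ r : ℝ, 1 < r → ξ r ∈ Set.Ioo (0:ℝ) 1)
    (heq : ∀ r : ℝ, 1 < r →
      deriv (fun s : ℝ => s ^ r / (1 - s)) (ξ r) * ξ r - (ξ r) ^ r / (1 - ξ r) = c) :
    Filter.Tendsto ξ Filter.atTop (nhds 1) ∧
    ∀ rn : ℕ → ℝ, (∀ n, 1 < rn n) → Filter.Tendsto rn Filter.atTop Filter.atTop →
      Filter.Tendsto (fun n => (ξ (rn n)) ^ (rn n) / (1 - ξ (rn n)))
        Filter.atTop (nhds 0) ∧
      Filter.Tendsto (fun n => deriv (fun s : ℝ => s ^ (rn n) / (1 - s)) (ξ (rn n)))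
        Filter.atTop (nhds c) := by
  -- the key algebraic identity
  have key : ∀ r : ℝ, 1 < r →
      c * (1 - ξ r) ^ 2 = (r - 1) * (ξ r) ^ r * (1 - ξ r) + (ξ r) ^ (r + 1) := by
    intro r hr
    obtain ⟨hx0, hx1⟩ := hmem r hr
    have hne : (1 : ℝ) - ξ r ≠ 0 := by linarith
    have hd := (aux_hasDeriv r (ξ r) hx0 hx1).deriv
    have he := heq r hr
    rw [hd] at he
    have e1 : (ξ r) ^ (r - 1) * ξ r = (ξ r) ^ r := by
      rw [← Real.rpow_add_one hx0.ne' (r - 1)]; ring_nf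
    have e2 : (ξ r) ^ (r + 1) = (ξ r) ^ r * ξ r := Real.rpow_add_one hx0.ne' r
    field_simp at he
    have key' : c * (1 - ξ r) ^ 2 * (1 - ξ r) =
        ((r - 1) * (ξ r) ^ r * (1 - ξ r) + (ξ r) ^ (r + 1)) * (1 - ξ r) := by
      linear_combination -(1 - ξ r) * he + r * (1 - ξ r) ^ 2 * e1 - (1 - ξ r) * e2
    exact mul_right_cancel₀ hne key'
  have h1 : Tendsto ξ atTop (nhds 1) := by
    rw [Metric.tendsto_atTop]
    intro ε hε
    set δ : ℝ := min ε 1 / 2 with hδdef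
    have hδ0 : 0 < δ := by positivity
    have hδ1 : δ < 1 := by
      have : min ε 1 ≤ 1 := min_le_right _ _
      simp only [hδdef]; linarith
    have hδε : δ < ε := by
      have h1 : min ε 1 ≤ ε := min_le_left _ _
      have h2 : 0 < min ε 1 := lt_min hε one_pos
      simp only [hδdef]; linarith
    set b : ℝ := 1 - δ with hbdef
    have hb0 : 0 < b := by simp only [hbdef]; linarith
    have hb1 : b < 1 := by simp only [hbdef]; linarith
    have htend := aux_mul_tendsto b hb0 hb1
    have hcδ : 0 < c * δ ^ 2 := by positivity
    obtain ⟨N, hN⟩ := (Metric.tendsto_atTop.mp htend) (c * δ ^ 2) hcδ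
    refine ⟨max N 2, fun r hrN => ?_⟩
    have hr : 1 < r := lt_of_lt_of_le (by norm_num) (le_trans (le_max_right N 2) hrN)
    obtain ⟨hx0, hx1⟩ := hmem r hr
    have hsmall : (r + 1) * b ^ r < c * δ ^ 2 := by
      have := hN r (le_trans (le_max_left N 2) hrN)
      rw [Real.dist_eq, sub_zero] at this
      calc (r + 1) * b ^ r ≤ |(r + 1) * b ^ r| := le_abs_self _
        _ < c * δ ^ 2 := this
    have hgt : b < ξ r := by
      by_contra hle
      push_neg at hle
      have hk := key r hr
      have hxr : (ξ r) ^ r ≤ b ^ r := Real.rpow_le_rpow hx0.le hle (by linarith)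
      have hxr1 : (ξ r) ^ (r + 1) ≤ b ^ (r + 1) :=
        Real.rpow_le_rpow hx0.le hle (by linarith)
      have hbr1 : b ^ (r + 1) ≤ b ^ r := by
        rw [Real.rpow_add_one hb0.ne' r]
        nlinarith [Real.rpow_nonneg hb0.le r]
      have h1ξ : δ ≤ 1 - ξ r := by
        have : ξ r ≤ 1 - δ := hle
        linarith
      have hbrpos : 0 ≤ b ^ r := Real.rpow_nonneg hb0.le r
      have hxrpos : 0 ≤ (ξ r) ^ r := Real.rpow_nonneg hx0.le r
      have u1 : 0 ≤ (r - 1) * (ξ r) ^ r * ξ r :=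
        mul_nonneg (mul_nonneg (by linarith) hxrpos) hx0.le
      have u2 : (r - 1) * (ξ r) ^ r ≤ (r - 1) * b ^ r :=
        mul_le_mul_of_nonneg_left hxr (by linarith)
      have hub : c * (1 - ξ r) ^ 2 ≤ (r + 1) * b ^ r := by
        rw [hk]; linarith
      have hlb : c * δ ^ 2 ≤ c * (1 - ξ r) ^ 2 := by
        nlinarith [mul_le_mul h1ξ h1ξ hδ0.le (by linarith : (0:ℝ) ≤ 1 - ξ r)]
      linarith
    rw [Real.dist_eq, abs_sub_lt_iff]
    have : 1 - δ < ξ r := hgt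
    constructor <;> linarith
  refine ⟨h1, fun rn hrn1 hrntop => ?_⟩
  have hbound : ∀ r : ℝ, 1 < r → (ξ r) ^ r / (1 - ξ r) ≤ c / (r - 1) := by
    intro r hr
    obtain ⟨hx0, hx1⟩ := hmem r hr
    have hk := key r hr
    have hxr1 : 0 ≤ (ξ r) ^ (r + 1) := Real.rpow_nonneg hx0.le _
    have h1ξ : 0 < 1 - ξ r := by linarith
    have hA : (r - 1) * (ξ r) ^ r * (1 - ξ r) ≤ c * (1 - ξ r) ^ 2 := by linarith
    have hA' : (r - 1) * (ξ r) ^ r ≤ c * (1 - ξ r) :=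
      le_of_mul_le_mul_right (by nlinarith) h1ξ
    rw [div_le_div_iff₀ h1ξ (by linarith)]
    nlinarith
  have hnonneg : ∀ n, 0 ≤ (ξ (rn n)) ^ (rn n) / (1 - ξ (rn n)) := by
    intro n
    obtain ⟨hx0, hx1⟩ := hmem (rn n) (hrn1 n)
    exact div_nonneg (Real.rpow_nonneg hx0.le _) (by linarith)
  have hlim : Tendsto (fun n => c / (rn n - 1)) atTop (nhds 0) := by
    have h2 : Tendsto (fun n => rn n - 1) atTop atTop :=
      tendsto_atTop_add_const_right _ (-1) hrntop
    have h3 := h2.inv_tendsto_atTop.const_mul c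
    simp only [mul_zero] at h3
    exact h3.congr (fun n => by simp [Pi.inv_apply, div_eq_mul_inv])
  have hf0 : Tendsto (fun n => (ξ (rn n)) ^ (rn n) / (1 - ξ (rn n))) atTop (nhds 0) :=
    squeeze_zero hnonneg (fun n => hbound (rn n) (hrn1 n)) hlim
  refine ⟨hf0, ?_⟩
  have hξ1 : Tendsto (fun n => ξ (rn n)) atTop (nhds 1) := h1.comp hrntop
  have hnum : Tendsto (fun n => c + (ξ (rn n)) ^ (rn n) / (1 - ξ (rn n))) atTop (nhds c) := by
    have := (tendsto_const_nhds (x := c) (f := atTop (α := ℕ))).add hf0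
    simpa using this
  have hdiv := hnum.div hξ1 one_ne_zero
  simp only [div_one] at hdiv
  refine hdiv.congr fun n => ?_
  obtain ⟨hx0, hx1⟩ := hmem (rn n) (hrn1 n)
  have he := heq (rn n) (hrn1 n)
  simp only [Pi.div_apply]
  rw [← he, sub_add_cancel, mul_div_assoc, div_self hx0.ne', mul_one]
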